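/- Let m≥1 be an integer, let a, c be real, let ε>0 and 0<x<1 with εx≠1, and for λ>0 large define F(λ) = Σ_{r=0}^{m} C(m,r)·(−x)^r·(a+ελ)_r/(c+λ)_r, where (y)_r is the Pochhammer symbol and C(m,r) the binomial coefficient (this is the terminating Gauss hypergeometric function ₂F₁(a+ελ,−m;c+λ;x)). Then, with X = εx/(1−εx), as λ→+∞: F(λ) = (1−εx)^m·(1 − (m/(ελ))·((a−εc)·X + ((m−1)(ε−1)/2)·X²)) + O(λ^{−2}); equivalently, λ·((1−εx)^{−m}·F(λ) − 1) tends to −(m/ε)·((a−εc)X + ((m−1)(ε−1)/2)X²). -/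

import Mathlib

open Real Filter Topology Asymptotics Finset

lemma my_ascPochhammer_prod (r : ℕ) (t : ℝ) :
    (ascPochhammer ℝ r).eval t = ∏ j ∈ range r, (t + j) := by
  induction r with
  | zero => simp
  | succ n ih => rw [ascPochhammer_succ_eval, prod_range_succ, ih]

lemma my_tendsto_ratio (β : ℝ) :
    Tendsto (fun lam : ℝ => lam / (lam + β)) atTop (𝓝 1) := by
  have h0 : Tendsto (fun lam : ℝ => (lam + β)⁻¹) atTop (𝓝 0) :=
    (tendsto_atTop_add_const_right _ β tendsto_id).inv_tendsto_atTop
  have h1 : Tendsto (fun lam : ℝ => 1 - β * (lam + β)⁻¹) atTop (𝓝 1) := by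
    simpa using tendsto_const_nhds.sub (h0.const_mul β)
  refine h1.congr' ?_
  filter_upwards [eventually_gt_atTop (-β)] with lam hlam
  have h : lam + β ≠ 0 := by linarith
  field_simp
  ring

lemma my_factor_tendsto (α β : ℝ) :
    Tendsto (fun lam : ℝ => (lam + α) / (lam + β)) atTop (𝓝 1) := by
  have h0 : Tendsto (fun lam : ℝ => (lam + β)⁻¹) atTop (𝓝 0) :=
    (tendsto_atTop_add_const_right _ β tendsto_id).inv_tendsto_atTop
  have h1 : Tendsto (fun lam : ℝ => 1 + (α - β) * (lam + β)⁻¹) atTop (𝓝 1) := by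
    simpa using tendsto_const_nhds.add (h0.const_mul (α - β))
  refine h1.congr' ?_
  filter_upwards [eventually_gt_atTop (-β)] with lam hlam
  have h : lam + β ≠ 0 := by linarith
  field_simp
  ring

lemma my_factor_tendsto1 (α β : ℝ) :
    Tendsto (fun lam : ℝ => lam * ((lam + α) / (lam + β) - 1)) atTop (𝓝 (α - β)) := by
  have h1 : Tendsto (fun lam : ℝ => (α - β) * (lam / (lam + β))) atTop (𝓝 (α - β)) := by
    simpa using (my_tendsto_ratio β).const_mul (α - β)
  refine h1.congr' ?_
  filter_upwards [eventually_gt_atTop (-β)] with lam hlam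
  have h : lam + β ≠ 0 := by linarith
  field_simp
  ring

lemma my_factor_tendsto2 (α β : ℝ) :
    Tendsto (fun lam : ℝ => lam ^ 2 * ((lam + α) / (lam + β) - 1 - (α - β) / lam)) atTop
      (𝓝 (-β * (α - β))) := by
  have h1 : Tendsto (fun lam : ℝ => (-β * (α - β)) * (lam / (lam + β))) atTop
      (𝓝 (-β * (α - β))) := by
    simpa using (my_tendsto_ratio β).const_mul (-β * (α - β))
  refine h1.congr' ?_
  filter_upwards [eventually_gt_atTop (max 0 (-β))] with lam hlam
  have h0 : lam ≠ 0 := by have := lt_of_le_of_lt (le_max_left 0 (-β)) hlam; linarith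
  have h : lam + β ≠ 0 := by have := lt_of_le_of_lt (le_max_right 0 (-β)) hlam; linarith
  field_simp
  ring

lemma my_prod_asymp (α β : ℕ → ℝ) : ∀ r : ℕ, ∃ C : ℝ,
    Tendsto (fun lam : ℝ => lam ^ 2 * (∏ j ∈ range r, (lam + α j) / (lam + β j) - 1
      - (∑ j ∈ range r, (α j - β j)) / lam)) atTop (𝓝 C) := by
  intro r
  induction r with
  | zero =>
    refine ⟨0, ?_⟩
    have : (fun lam : ℝ => lam ^ 2 * (∏ j ∈ range 0, (lam + α j) / (lam + β j) - 1
        - (∑ j ∈ range 0, (α j - β j)) / lam)) = fun _ => (0 : ℝ) := by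
      funext lam; simp
    rw [this]; exact tendsto_const_nhds
  | succ r ih =>
    obtain ⟨C, hC⟩ := ih
    set B : ℝ := ∑ j ∈ range r, (α j - β j) with hB
    refine ⟨C * 1 + (-(β r) * (α r - β r)) + B * (α r - β r), ?_⟩
    have h1 := (hC.mul (my_factor_tendsto (α r) (β r))).add
      ((my_factor_tendsto2 (α r) (β r)).add ((my_factor_tendsto1 (α r) (β r)).const_mul B))
    have h1' : Tendsto (fun lam : ℝ =>
        lam ^ 2 * (∏ j ∈ range r, (lam + α j) / (lam + β j) - 1 - B / lam)
          * ((lam + α r) / (lam + β r))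
        + (lam ^ 2 * ((lam + α r) / (lam + β r) - 1 - (α r - β r) / lam)
        + B * (lam * ((lam + α r) / (lam + β r) - 1)))) atTop
        (𝓝 (C * 1 + (-(β r) * (α r - β r)) + B * (α r - β r))) := by
      convert h1 using 2; ring
    refine h1'.congr' ?_
    filter_upwards [eventually_gt_atTop 0] with lam hlam
    have h0 : lam ≠ 0 := ne_of_gt hlam
    rw [prod_range_succ, sum_range_succ, ← hB]
    set f := (lam + α r) / (lam + β r) with hf
    set P := ∏ j ∈ range r, (lam + α j) / (lam + β j) with hP
    field_simp
    ring

lemma my_prod_asymp1 (α β : ℕ → ℝ) (r : ℕ) :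
    Tendsto (fun lam : ℝ => lam * (∏ j ∈ range r, (lam + α j) / (lam + β j) - 1)) atTop
      (𝓝 (∑ j ∈ range r, (α j - β j))) := by
  obtain ⟨C, hC⟩ := my_prod_asymp α β r
  set B : ℝ := ∑ j ∈ range r, (α j - β j) with hB
  have h1 : Tendsto (fun lam : ℝ => B + lam⁻¹ *
      (lam ^ 2 * (∏ j ∈ range r, (lam + α j) / (lam + β j) - 1 - B / lam))) atTop
      (𝓝 (B + 0 * C)) :=
    tendsto_const_nhds.add (tendsto_inv_atTop_zero.mul hC)
  have h1' : Tendsto (fun lam : ℝ => B + lam⁻¹ *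
      (lam ^ 2 * (∏ j ∈ range r, (lam + α j) / (lam + β j) - 1 - B / lam))) atTop (𝓝 B) := by
    simpa using h1
  refine h1'.congr' ?_
  filter_upwards [eventually_gt_atTop 0] with lam hlam
  have h0 : lam ≠ 0 := ne_of_gt hlam
  set P := ∏ j ∈ range r, (lam + α j) / (lam + β j) with hP
  field_simp
  ring

lemma my_sum_choose (m : ℕ) (y : ℝ) :
    ∑ r ∈ range (m + 1), (m.choose r : ℝ) * y ^ r = (y + 1) ^ m := by
  rw [add_pow]
  refine Finset.sum_congr rfl fun k _ => ?_
  ring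

lemma my_choose_succ (n s : ℕ) :
    ((n + 1).choose (s + 1) : ℝ) * ((s : ℝ) + 1) = ((n : ℝ) + 1) * (n.choose s : ℝ) := by
  have := Nat.add_one_mul_choose_eq n s
  have h : ((Nat.succ n * n.choose s : ℕ) : ℝ) = (((n + 1).choose (s + 1) * (s + 1) : ℕ) : ℝ) := by
    exact_mod_cast congrArg Nat.cast this
  push_cast at h
  linarith

lemma my_sum_choose_r (n : ℕ) (y : ℝ) :
    ∑ r ∈ range (n + 2), ((n + 1).choose r : ℝ) * (r : ℝ) * y ^ r
      = ((n : ℝ) + 1) * (y * (y + 1) ^ n) := by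
  rw [Finset.sum_range_succ']
  have h : ∀ s ∈ range (n + 1), ((n + 1).choose (s + 1) : ℝ) * ((s + 1 : ℕ) : ℝ) * y ^ (s + 1)
      = ((n : ℝ) + 1) * y * ((n.choose s : ℝ) * y ^ s) := by
    intro s _
    push_cast
    linear_combination y ^ (s + 1) * my_choose_succ n s
  rw [Finset.sum_congr rfl h, ← Finset.mul_sum, my_sum_choose]
  norm_num
  ring

lemma my_sum_choose_rr (k : ℕ) (y : ℝ) :
    ∑ r ∈ range (k + 3), ((k + 2).choose r : ℝ) * ((r : ℝ) * ((r : ℝ) - 1)) * y ^ r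
      = ((k : ℝ) + 2) * (((k : ℝ) + 1) * (y ^ 2 * (y + 1) ^ k)) := by
  rw [Finset.sum_range_succ', Finset.sum_range_succ']
  have h : ∀ t ∈ range (k + 1),
      ((k + 2).choose (t + 1 + 1) : ℝ) * (((t + 1 + 1 : ℕ) : ℝ) * (((t + 1 + 1 : ℕ) : ℝ) - 1)) * y ^ (t + 1 + 1)
      = ((k : ℝ) + 2) * (((k : ℝ) + 1) * y ^ 2) * ((k.choose t : ℝ) * y ^ t) := by
    intro t _
    have h1 := my_choose_succ (k + 1) (t + 1)
    have h2 := my_choose_succ k t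
    push_cast at h1 h2 ⊢
    linear_combination y ^ (t + 2) * (((t : ℝ) + 1) * h1 + ((k : ℝ) + 2) * h2)
  rw [Finset.sum_congr rfl h, ← Finset.mul_sum, my_sum_choose]
  norm_num
  ring

lemma my_sum_range_id (r : ℕ) : ∑ j ∈ range r, (j : ℝ) = (r : ℝ) * ((r : ℝ) - 1) / 2 := by
  induction r with
  | zero => simp
  | succ n ih => rw [Finset.sum_range_succ, ih]; push_cast; ring

/-- Asymptotics (5.3) to first order for the terminating hypergeometric function
`F(λ) = ₂F₁(a+ελ, -m; c+λ; x) = Σ_{r=0}^m C(m,r) (-x)^r (a+ελ)_r/(c+λ)_r`: with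
`X = εx/(1-εx)`, as `λ → +∞`,
`F(λ) = (1-εx)^m (1 - (m/(ελ))((a-εc)X + ((m-1)(ε-1)/2)X²)) + O(λ⁻²)`; equivalently,
`λ ((1-εx)^{-m} F(λ) - 1) → -(m/ε)((a-εc)X + ((m-1)(ε-1)/2)X²)`. -/
theorem terminating_2F1_expansion (m : ℕ) (hm : 1 ≤ m) (a c ε x : ℝ)
    (hε : 0 < ε) (hx0 : 0 < x) (hx1 : x < 1) (hεx : ε * x ≠ 1) :
    ((fun lam : ℝ =>
        (∑ r ∈ Finset.range (m + 1), (m.choose r : ℝ) * (-x) ^ r *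
            ((ascPochhammer ℝ r).eval (a + ε * lam) / (ascPochhammer ℝ r).eval (c + lam)))
          - (1 - ε * x) ^ m * (1 - (m / (ε * lam)) *
              ((a - ε * c) * (ε * x / (1 - ε * x))
                + ((m - 1) * (ε - 1) / 2) * (ε * x / (1 - ε * x)) ^ 2)))
      =O[atTop] fun lam : ℝ => 1 / lam ^ 2) ∧
    Tendsto
      (fun lam : ℝ => lam *
        ((∑ r ∈ Finset.range (m + 1), (m.choose r : ℝ) * (-x) ^ r *
            ((ascPochhammer ℝ r).eval (a + ε * lam) / (ascPochhammer ℝ r).eval (c + lam)))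
              / (1 - ε * x) ^ m - 1))
      atTop
      (𝓝 (-(m / ε) * ((a - ε * c) * (ε * x / (1 - ε * x))
          + ((m - 1) * (ε - 1) / 2) * (ε * x / (1 - ε * x)) ^ 2))) := by
  obtain ⟨n, rfl⟩ : ∃ n, m = n + 1 := ⟨m - 1, (Nat.succ_pred_eq_of_pos hm).symm⟩
  have hε0 : ε ≠ 0 := ne_of_gt hε
  have hs : (1 : ℝ) - ε * x ≠ 0 := sub_ne_zero.mpr (Ne.symm hεx)
  have hF0 : ((1 : ℝ) - ε * x) ^ (n + 1) ≠ 0 := pow_ne_zero _ hs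
  set y : ℝ := -(ε * x) with hy
  set α : ℕ → ℝ := fun j => (a + j) / ε with hα
  set β : ℕ → ℝ := fun j => c + j with hβ
  set κ : ℕ → ℝ := fun r => ((n + 1).choose r : ℝ) * y ^ r with hκ
  set G : ℝ → ℝ :=
    fun lam => ∑ r ∈ Finset.range (n + 1 + 1), κ r * ∏ j ∈ Finset.range r,
      (lam + α j) / (lam + β j) with hG
  set L : ℝ := ∑ r ∈ Finset.range (n + 1 + 1), κ r * ∑ j ∈ Finset.range r, (α j - β j)
    with hLdef
  -- the binomial sum of κ
  have hκsum : ∑ r ∈ Finset.range (n + 1 + 1), κ r = (1 - ε * x) ^ (n + 1) := by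
    simp only [hκ]
    rw [my_sum_choose]
    congr 1
    rw [hy]; ring
  -- per-term identity: F-terms equal G-terms
  have hFG : ∀ (lam : ℝ) (r : ℕ), ((n + 1).choose r : ℝ) * (-x) ^ r *
      ((ascPochhammer ℝ r).eval (a + ε * lam) / (ascPochhammer ℝ r).eval (c + lam))
      = κ r * ∏ j ∈ Finset.range r, (lam + α j) / (lam + β j) := by
    intro lam r
    rw [my_ascPochhammer_prod, my_ascPochhammer_prod, ← Finset.prod_div_distrib]
    have hterm : ∀ j ∈ Finset.range r,
        (a + ε * lam + (j : ℝ)) / (c + lam + (j : ℝ)) = ε * ((lam + α j) / (lam + β j)) := by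
      intro j _
      simp only [hα, hβ]
      rw [mul_div_assoc']
      congr 1
      · field_simp
        ring
      · ring
    rw [Finset.prod_congr rfl hterm, Finset.prod_mul_distrib, Finset.prod_const,
      Finset.card_range]
    have hpow : (-x) ^ r * ε ^ r = y ^ r := by
      rw [← mul_pow]; congr 1; rw [hy]; ring
    simp only [hκ]
    linear_combination (((n + 1).choose r : ℝ) * ∏ j ∈ Finset.range r,
      (lam + α j) / (lam + β j)) * hpow
  have hFsum : ∀ lam : ℝ,
      (∑ r ∈ Finset.range (n + 1 + 1), ((n + 1).choose r : ℝ) * (-x) ^ r *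
        ((ascPochhammer ℝ r).eval (a + ε * lam) / (ascPochhammer ℝ r).eval (c + lam)))
      = G lam := by
    intro lam
    simp only [hG]
    exact Finset.sum_congr rfl fun r _ => hFG lam r
  -- first-order limit
  have limL : Tendsto (fun lam : ℝ => lam * (G lam - (1 - ε * x) ^ (n + 1))) atTop (𝓝 L) := by
    have h := tendsto_finset_sum (Finset.range (n + 1 + 1))
      (fun r (_ : r ∈ Finset.range (n + 1 + 1)) => (my_prod_asymp1 α β r).const_mul (κ r))
    rw [show (∑ r ∈ Finset.range (n + 1 + 1), κ r * ∑ j ∈ Finset.range r, (α j - β j)) = L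
      from hLdef.symm] at h
    refine h.congr fun lam => ?_
    rw [← hκsum]
    simp only [hG]
    rw [← Finset.sum_sub_distrib, Finset.mul_sum]
    exact Finset.sum_congr rfl fun r _ => by ring
  -- second-order limit
  have limD : ∃ D, Tendsto
      (fun lam : ℝ => lam ^ 2 * (G lam - (1 - ε * x) ^ (n + 1) - L / lam)) atTop (𝓝 D) := by
    choose C hC using my_prod_asymp α β
    refine ⟨∑ r ∈ Finset.range (n + 1 + 1), κ r * C r, ?_⟩
    have h := tendsto_finset_sum (Finset.range (n + 1 + 1))
      (fun r (_ : r ∈ Finset.range (n + 1 + 1)) => (hC r).const_mul (κ r))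
    refine h.congr fun lam => ?_
    rw [← hκsum]
    simp only [hG, hLdef]
    rw [Finset.sum_div, ← Finset.sum_sub_distrib, ← Finset.sum_sub_distrib, Finset.mul_sum]
    refine Finset.sum_congr rfl fun r _ => ?_
    rw [mul_div_assoc]
    ring
  -- value of B r
  have hBval : ∀ r : ℕ, (∑ j ∈ Finset.range r, (α j - β j))
      = (r : ℝ) * (a / ε - c) + ((r : ℝ) * ((r : ℝ) - 1) / 2) * (1 / ε - 1) := by
    intro r
    simp only [hα, hβ]
    have h : ∀ j ∈ Finset.range r,
        (a + (j : ℝ)) / ε - (c + (j : ℝ)) = (a / ε - c) + (j : ℝ) * (1 / ε - 1) := by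
      intro j _; ring
    rw [Finset.sum_congr rfl h, Finset.sum_add_distrib, Finset.sum_const, Finset.card_range,
      ← Finset.sum_mul, my_sum_range_id, nsmul_eq_mul]
    try ring
  -- value of L
  have hLval : L = (1 - ε * x) ^ (n + 1) *
      (-(((n : ℝ) + 1) / ε) * ((a - ε * c) * (ε * x / (1 - ε * x))
        + (((n : ℝ) + 1 - 1) * (ε - 1) / 2) * (ε * x / (1 - ε * x)) ^ 2)) := by
    have hterm : ∀ r ∈ Finset.range (n + 1 + 1), κ r * ∑ j ∈ Finset.range r, (α j - β j)
        = (a / ε - c) * (((n + 1).choose r : ℝ) * (r : ℝ) * y ^ r)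
          + ((1 / ε - 1) / 2) * (((n + 1).choose r : ℝ) * ((r : ℝ) * ((r : ℝ) - 1)) * y ^ r) := by
      intro r _
      rw [hBval r]
      simp only [hκ]
      ring
    rw [hLdef, Finset.sum_congr rfl hterm, Finset.sum_add_distrib, ← Finset.mul_sum,
      ← Finset.mul_sum]
    rw [show n + 1 + 1 = n + 2 from rfl, my_sum_choose_r]
    cases n with
    | zero =>
      rw [show (0 + 2) = 2 from rfl]
      rw [Finset.sum_range_succ, Finset.sum_range_succ, Finset.sum_range_zero]
      simp only [hy]
      norm_num
      field_simp
    | succ k =>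
      rw [show (k + 1 + 2) = k + 3 from rfl, my_sum_choose_rr]
      simp only [hy]
      push_cast
      field_simp
      ring
  constructor
  · -- IsBigO part
    obtain ⟨D, hD⟩ := limD
    have h1 : (fun lam : ℝ => lam ^ 2 * (G lam - (1 - ε * x) ^ (n + 1) - L / lam))
        =O[atTop] (fun _ : ℝ => (1 : ℝ)) := hD.isBigO_one ℝ
    have h2 := h1.mul (isBigO_refl (fun lam : ℝ => 1 / lam ^ 2) atTop)
    refine h2.congr' ?_ (Filter.Eventually.of_forall fun lam => one_mul _)
    filter_upwards [eventually_gt_atTop 0] with lam hlam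
    have h0 : (lam : ℝ) ^ 2 ≠ 0 := pow_ne_zero _ (ne_of_gt hlam)
    rw [one_div, mul_comm ((lam : ℝ) ^ 2) (G lam - (1 - ε * x) ^ (n + 1) - L / lam),
      mul_assoc, mul_inv_cancel₀ h0, mul_one]
    rw [hFsum lam, hLval]
    push_cast
    ring
  · -- Tendsto part
    have h2 : Tendsto (fun lam : ℝ =>
        (lam * (G lam - (1 - ε * x) ^ (n + 1))) / (1 - ε * x) ^ (n + 1)) atTop
        (𝓝 (L / (1 - ε * x) ^ (n + 1))) := limL.div_const _
    have hLF : L / (1 - ε * x) ^ (n + 1) = -(((n : ℝ) + 1) / ε) *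
        ((a - ε * c) * (ε * x / (1 - ε * x))
          + (((n : ℝ) + 1 - 1) * (ε - 1) / 2) * (ε * x / (1 - ε * x)) ^ 2) := by
      rw [hLval, mul_comm, mul_div_assoc, div_self hF0, mul_one]
    rw [hLF] at h2
    have hpt : ∀ lam : ℝ, (lam * (G lam - (1 - ε * x) ^ (n + 1))) / (1 - ε * x) ^ (n + 1)
        = lam * ((∑ r ∈ Finset.range (n + 1 + 1), ((n + 1).choose r : ℝ) * (-x) ^ r *
            ((ascPochhammer ℝ r).eval (a + ε * lam) / (ascPochhammer ℝ r).eval (c + lam)))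
              / (1 - ε * x) ^ (n + 1) - 1) := by
      intro lam
      rw [hFsum lam]
      field_simp
    have h3 := h2.congr hpt
    convert h3 using 2
    · push_cast
      ring
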